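/- For every integer j ≥ 1 and every integer m ≥ 0, the value (1/j) · ∑_{d ∣ j} μ(d) m^{j/d} is a nonnegative integer. -/

import Mathlib

open Polynomial Finset

/-- The j-th necklace polynomial M_j(z) = (1/j) ∑_{d ∣ j} μ(d) z^{j/d} in ℚ[z]. -/
noncomputable def necklace (j : ℕ) : Polynomial ℚ :=
  Polynomial.C (1 / (j : ℚ)) *
    ∑ d ∈ j.divisors, Polynomial.C ((ArithmeticFunction.moebius d : ℤ) : ℚ) *
      Polynomial.X ^ (j / d)

/-- Little Fermat for integers. -/
private lemma fermat_int (p : ℕ) (hp : p.Prime) (m : ℤ) : (p : ℤ) ∣ m ^ p - m := by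
  haveI := Fact.mk hp
  have : ((m ^ p - m : ℤ) : ZMod p) = 0 := by
    push_cast
    rw [ZMod.pow_card]
    ring
  exact (ZMod.intCast_zmod_eq_zero_iff_dvd _ _).mp this

/-- `p^(k+1) ∣ m^(p^(k+1)) - m^(p^k)`. -/
private lemma pow_dvd_pow_sub_pow (p : ℕ) (hp : p.Prime) (k : ℕ) (m : ℤ) :
    (p : ℤ) ^ (k + 1) ∣ m ^ p ^ (k + 1) - m ^ p ^ k := by
  have h := dvd_sub_pow_of_dvd_sub (fermat_int p hp m) k
  have h1 : ((m ^ p) ^ p ^ k : ℤ) = m ^ p ^ (k + 1) := by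
    rw [← pow_mul, pow_succ, mul_comm (p ^ k) p, pow_mul]
  rw [h1] at h
  exact_mod_cast h

open ArithmeticFunction ArithmeticFunction.Moebius in
/-- The key prime-power divisibility for the necklace sum. -/
private lemma prime_pow_dvd_necklace_sum (p : ℕ) (hp : p.Prime) {n : ℕ} (hn : n ≠ 0)
    (hpn : p ∣ n) (m : ℤ) :
    (p : ℤ) ^ (n.factorization p) ∣ ∑ d ∈ n.divisors, (μ d : ℤ) * m ^ (n / d) := by
  classical
  set κ := n.factorization p with hκdef
  have hκ : 1 ≤ κ := hp.factorization_pos_of_dvd hn hpn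
  set f : ℕ → ℤ := fun d => (μ d : ℤ) * m ^ (n / d) with hf
  set B : Finset ℕ := n.divisors.filter (fun d => ¬ p ∣ d) with hB
  have hpκ : p ^ κ ∣ n := Nat.ordProj_dvd n p
  -- every element of B gives p*e ∣ n
  have hpe_dvd : ∀ e ∈ B, p * e ∣ n := by
    intro e he
    rw [hB, Finset.mem_filter] at he
    obtain ⟨he1, he2⟩ := he
    have hen : e ∣ n := (Nat.mem_divisors.mp he1).1
    exact Nat.Coprime.mul_dvd_of_dvd_of_dvd
      ((Nat.Prime.coprime_iff_not_dvd hp).mpr he2) hpn hen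
  have hsplit :
      ∑ d ∈ n.divisors, f d
        = ∑ d ∈ n.divisors.filter (fun d => p ∣ d), f d + ∑ d ∈ B, f d := by
    rw [hB, Finset.sum_filter_add_sum_filter_not]
  -- the sum over divisors divisible by p equals the sum over images p*e, e ∈ B
  have himg :
      ∑ d ∈ n.divisors.filter (fun d => p ∣ d), f d = ∑ e ∈ B, f (p * e) := by
    have himg2 : ∑ d ∈ B.image (fun e => p * e), f d = ∑ e ∈ B, f (p * e) :=
      Finset.sum_image (fun x _ y _ h => Nat.eq_of_mul_eq_mul_left hp.pos h)
    rw [← himg2]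
    apply (Finset.sum_subset ?_ ?_).symm
    · intro d hd
      rw [Finset.mem_image] at hd
      obtain ⟨e, heB, rfl⟩ := hd
      rw [Finset.mem_filter, Nat.mem_divisors]
      exact ⟨⟨hpe_dvd e heB, hn⟩, Dvd.intro e rfl⟩
    · intro d hd hd'
      rw [Finset.mem_filter, Nat.mem_divisors] at hd
      obtain ⟨⟨hdn, -⟩, hpd⟩ := hd
      -- d is divisible by p but not of the form p*e with p ∤ e, so p^2 ∣ d
      have hp2 : p * p ∣ d := by
        by_contra hcon
        obtain ⟨e, rfl⟩ := hpd
        have hpe : ¬ p ∣ e := fun h => hcon (mul_dvd_mul_left p h)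
        apply hd'
        rw [Finset.mem_image]
        refine ⟨e, ?_, rfl⟩
        rw [hB, Finset.mem_filter, Nat.mem_divisors]
        exact ⟨⟨(dvd_mul_left e p).trans (dvd_refl _) |>.trans hdn, hn⟩, hpe⟩
      have hnsq : ¬ Squarefree d := fun hsq => hp.not_isUnit (hsq p hp2)
      simp [hf, moebius_eq_zero_of_not_squarefree hnsq]
  rw [hsplit, himg, ← Finset.sum_add_distrib]
  apply Finset.dvd_sum
  intro e heB
  have heB' := heB
  rw [hB, Finset.mem_filter, Nat.mem_divisors] at heB'
  obtain ⟨⟨hen, -⟩, hpe⟩ := heB'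
  have he0 : e ≠ 0 := by
    rintro rfl
    exact hn (Nat.eq_zero_of_zero_dvd hen)
  -- μ(p*e) = -μ e
  have hmu : (μ (p * e) : ℤ) = -(μ e : ℤ) := by
    rw [isMultiplicative_moebius.map_mul_of_coprime
      ((Nat.Prime.coprime_iff_not_dvd hp).mpr hpe), moebius_apply_prime hp]
    ring
  have hpen : p * e ∣ n := hpe_dvd e heB
  set a := n / (p * e) with ha
  have hna : n = p * e * a := (Nat.mul_div_cancel' hpen).symm
  have hne : n / e = p * a := by
    rw [hna, mul_comm p e, mul_assoc]
    exact Nat.mul_div_cancel_left _ (Nat.pos_of_ne_zero he0)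
  have hpk : p ^ κ = p * p ^ (κ - 1) := by
    conv_lhs => rw [← Nat.sub_add_cancel hκ]
    rw [pow_succ']
  have hκ1 : p ^ (κ - 1) ∣ a := by
    have h1 : p * p ^ (κ - 1) ∣ p * (e * a) := by
      rw [← hpk, ← mul_assoc, ← hna]
      exact hpκ
    have h2 : p ^ (κ - 1) ∣ e * a := (mul_dvd_mul_iff_left hp.pos.ne').mp h1
    exact Nat.Coprime.dvd_of_dvd_mul_left
      (Nat.Coprime.pow_left _ ((Nat.Prime.coprime_iff_not_dvd hp).mpr hpe)) h2
  obtain ⟨c, hc⟩ := hκ1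
  have key : (p : ℤ) ^ κ ∣ m ^ (n / e) - m ^ a := by
    have h3 : (p : ℤ) ^ κ ∣ m ^ p ^ κ - m ^ p ^ (κ - 1) := by
      have h := pow_dvd_pow_sub_pow p hp (κ - 1) m
      rwa [Nat.sub_add_cancel hκ] at h
    have h4 := h3.trans (sub_dvd_pow_sub_pow (m ^ p ^ κ) (m ^ p ^ (κ - 1)) c)
    rw [← pow_mul, ← pow_mul] at h4
    have e1 : p ^ κ * c = n / e := by
      rw [hne, hc, hpk]
      ring
    have e2 : p ^ (κ - 1) * c = a := hc.symm
    rwa [e1, e2] at h4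
  have hterm : f (p * e) + f e = (μ e : ℤ) * (m ^ (n / e) - m ^ a) := by
    simp only [hf]
    rw [hmu, ← ha]
    ring
  rw [hterm]
  exact key.mul_left _

open ArithmeticFunction ArithmeticFunction.Moebius in
/-- The necklace sum is divisible by n. -/
private lemma nat_dvd_necklace_sum {n : ℕ} (hn : n ≠ 0) (m : ℤ) :
    (n : ℤ) ∣ ∑ d ∈ n.divisors, (μ d : ℤ) * m ^ (n / d) := by
  set S : ℤ := ∑ d ∈ n.divisors, (μ d : ℤ) * m ^ (n / d) with hS
  rw [Int.natCast_dvd]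
  rw [Nat.dvd_iff_prime_pow_dvd_dvd]
  intro p k hp hpk
  have hk : k ≤ n.factorization p := (Nat.Prime.pow_dvd_iff_le_factorization hp hn).mp hpk
  rcases Nat.eq_zero_or_pos (n.factorization p) with h0 | hpos
  · have hk0 : k = 0 := by omega
    subst hk0
    simp
  · have hpn : p ∣ n := by
      have h := Nat.ordProj_dvd n p
      exact (dvd_pow_self p hpos.ne').trans h
    have hdvd : (p : ℤ) ^ (n.factorization p) ∣ S :=
      prime_pow_dvd_necklace_sum p hp hn hpn m
    have : ((p : ℤ)) ^ k ∣ S := (pow_dvd_pow _ hk).trans hdvd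
    have h2 : (↑(p ^ k) : ℤ) ∣ S := by exact_mod_cast this
    rwa [Int.natCast_dvd] at h2

private lemma two_mul_le_two_pow_add_one (t : ℕ) : 2 * t ≤ 2 ^ t + 1 := by
  induction t with
  | zero => simp
  | succ k ih =>
    rcases Nat.eq_zero_or_pos k with hk | hk
    · subst hk; norm_num
    · have h2 : 2 ≤ 2 ^ k := by
        calc 2 = 2 ^ 1 := (pow_one 2).symm
        _ ≤ 2 ^ k := Nat.pow_le_pow_right (by norm_num) hk
      have h3 : 2 ^ (k + 1) = 2 ^ k * 2 := pow_succ 2 k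
      omega

open ArithmeticFunction ArithmeticFunction.Moebius in
/-- The necklace sum is nonnegative. -/
private lemma necklace_sum_nonneg {n : ℕ} (hn : n ≠ 0) (m : ℕ) :
    0 ≤ ∑ d ∈ n.divisors, (μ d : ℤ) * (m : ℤ) ^ (n / d) := by
  classical
  rcases Nat.lt_or_ge m 2 with hm | hm
  · -- m = 0 or m = 1
    interval_cases m
    · -- m = 0 : every term vanishes
      apply le_of_eq
      symm
      apply Finset.sum_eq_zero
      intro d hd
      have hd1 : d ∣ n := (Nat.mem_divisors.mp hd).1
      have : 0 < n / d := Nat.div_pos (Nat.le_of_dvd (Nat.pos_of_ne_zero hn) hd1)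
        (Nat.pos_of_mem_divisors hd)
      simp [zero_pow this.ne']
    · -- m = 1 : the sum is ∑ μ d = (μ * ζ) n ∈ {0, 1}
      have h1 : ∑ d ∈ n.divisors, (μ d : ℤ) * ((1 : ℕ) : ℤ) ^ (n / d)
          = ∑ d ∈ n.divisors, μ d := by
        simp
      rw [h1, ← ArithmeticFunction.coe_mul_zeta_apply, moebius_mul_coe_zeta]
      rw [ArithmeticFunction.one_apply]
      split_ifs <;> norm_num
  · rcases Nat.eq_or_lt_of_le (Nat.one_le_iff_ne_zero.mpr hn) with h1 | hn2
    · -- n = 1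
      rw [← h1]
      simp
    · -- n ≥ 2, m ≥ 2 : estimate
      have h1mem : (1 : ℕ) ∈ n.divisors := Nat.one_mem_divisors.mpr hn
      rw [← Finset.add_sum_erase _ _ h1mem]
      have hμ1 : (μ 1 : ℤ) = 1 := by simp
      have hEbound : ∀ d ∈ n.divisors.erase 1,
          -((m : ℤ) ^ (n / 2)) ≤ (μ d : ℤ) * (m : ℤ) ^ (n / d) := by
        intro d hd
        obtain ⟨hd1, hdmem⟩ := Finset.mem_erase.mp hd
        have hd2 : 2 ≤ d := by
          have := Nat.pos_of_mem_divisors hdmem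
          omega
        have hdiv : n / d ≤ n / 2 := Nat.div_le_div_left hd2 (by norm_num)
        have hpow : (m : ℤ) ^ (n / d) ≤ (m : ℤ) ^ (n / 2) :=
          pow_le_pow_right₀ (by exact_mod_cast Nat.one_le_of_lt hm) hdiv
        have hpownn : (0 : ℤ) ≤ (m : ℤ) ^ (n / d) := by positivity
        obtain ⟨hμge, hμle⟩ := abs_le.mp (abs_moebius_le_one (n := d))
        nlinarith [mul_nonneg (by linarith : (0:ℤ) ≤ (μ d : ℤ) + 1) hpownn]
      have hsum_ge : -((n : ℤ) - 1) * (m : ℤ) ^ (n / 2)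
          ≤ ∑ d ∈ n.divisors.erase 1, (μ d : ℤ) * (m : ℤ) ^ (n / d) := by
        have hcard : (n.divisors.erase 1).card ≤ n - 1 := by
          have hsub : n.divisors ⊆ Finset.Icc 1 n := by
            intro d hd
            rw [Finset.mem_Icc]
            exact ⟨Nat.pos_of_mem_divisors hd,
              Nat.le_of_dvd (Nat.pos_of_ne_zero hn) (Nat.mem_divisors.mp hd).1⟩
          have := Finset.card_le_card hsub
          rw [Nat.card_Icc] at this
          rw [Finset.card_erase_of_mem h1mem]
          omega
        calc -((n : ℤ) - 1) * (m : ℤ) ^ (n / 2)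
            ≤ -(((n.divisors.erase 1).card : ℤ)) * (m : ℤ) ^ (n / 2) := by
              have : ((n.divisors.erase 1).card : ℤ) ≤ (n : ℤ) - 1 := by
                have hn1 : (1 : ℕ) ≤ n := Nat.one_le_iff_ne_zero.mpr hn
                omega
              have hp : (0 : ℤ) ≤ (m : ℤ) ^ (n / 2) := by positivity
              nlinarith
          _ = ∑ _d ∈ n.divisors.erase 1, (-((m : ℤ) ^ (n / 2))) := by
              rw [Finset.sum_const, nsmul_eq_mul]
              ring
          _ ≤ ∑ d ∈ n.divisors.erase 1, (μ d : ℤ) * (m : ℤ) ^ (n / d) :=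
              Finset.sum_le_sum hEbound
      have hmain : ((n : ℤ) - 1) * (m : ℤ) ^ (n / 2) ≤ (m : ℤ) ^ n := by
        have hnat : (n - 1) * m ^ (n / 2) ≤ m ^ n := by
          have hsplit : n = n / 2 + (n - n / 2) := by omega
          have ht : n - n / 2 = (n + 1) / 2 := by omega
          set t := (n + 1) / 2 with htdef
          have h2t : n ≤ 2 * t := by omega
          have hle : n - 1 ≤ m ^ t := by
            have := two_mul_le_two_pow_add_one t
            have h2m : 2 ^ t ≤ m ^ t := Nat.pow_le_pow_left hm t
            omega
          calc (n - 1) * m ^ (n / 2) ≤ m ^ t * m ^ (n / 2) :=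
                Nat.mul_le_mul_right _ hle
            _ = m ^ n := by rw [← pow_add]; congr 1; omega
        have hcast : ((n : ℤ) - 1) = ((n - 1 : ℕ) : ℤ) := by omega
        calc ((n : ℤ) - 1) * (m : ℤ) ^ (n / 2)
            = (((n - 1) * m ^ (n / 2) : ℕ) : ℤ) := by rw [hcast]; push_cast; ring
          _ ≤ ((m ^ n : ℕ) : ℤ) := by exact_mod_cast hnat
          _ = (m : ℤ) ^ n := by push_cast; ring
      have := hsum_ge
      rw [hμ1]
      simp only [Nat.div_one]
      nlinarith
  

theorem necklace_value_nonneg_integer (j m : ℕ) (hj : 1 ≤ j) :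
    ∃ k : ℕ, (k : ℚ) = (1 / (j : ℚ)) * ∑ d ∈ j.divisors,
      ((ArithmeticFunction.moebius d : ℤ) : ℚ) * (m : ℚ) ^ (j / d) := by
  have hj0 : j ≠ 0 := by omega
  set S : ℤ := ∑ d ∈ j.divisors, (ArithmeticFunction.moebius d : ℤ) * (m : ℤ) ^ (j / d)
    with hS
  have hdvd : (j : ℤ) ∣ S := nat_dvd_necklace_sum hj0 (m : ℤ)
  have hnn : 0 ≤ S := necklace_sum_nonneg hj0 m
  obtain ⟨q, hq⟩ := hdvd
  have hq0 : 0 ≤ q := by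
    by_contra hq0
    push_neg at hq0
    have hjpos : (0 : ℤ) < j := by exact_mod_cast Nat.pos_of_ne_zero hj0
    nlinarith
  refine ⟨q.toNat, ?_⟩
  have hsum : ∑ d ∈ j.divisors,
      ((ArithmeticFunction.moebius d : ℤ) : ℚ) * (m : ℚ) ^ (j / d) = (S : ℚ) := by
    rw [hS]
    push_cast
    ring
  rw [hsum, hq]
  have hjne : (j : ℚ) ≠ 0 := by exact_mod_cast hj0
  push_cast [Int.toNat_of_nonneg hq0]
  field_simp
  exact_mod_cast Int.toNat_of_nonneg hq0
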